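/- Let A be a bounded operator on a Hilbert space and z a complex number with dist(z, NumRan(A)) > 0, where NumRan(A) denotes the closure of the numerical range. Then A - z is injective with closed range and ‖(A - z)^{-1}‖ ≤ dist(z, NumRan(A))^{-1} on its range; if moreover z is in the unbounded component of the complement of NumRan(A) or A - z is surjective, then A - z is boundedly invertible with ‖(A - z)^{-1}‖ ≤ dist(z, NumRan(A))^{-1}. -/

import Mathlib

/-- The closure of the numerical range of a bounded operator on a complex Hilbert space. -/
noncomputable def numRanCl {H : Type*} [NormedAddCommGroup H] [InnerProductSpace ℂ H]
    (A : H →L[ℂ] H) : Set ℂ :=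
  closure {w | ∃ ψ : H, ‖ψ‖ = 1 ∧ inner ℂ ψ (A ψ) = w}

section aux
variable {H : Type*} [NormedAddCommGroup H] [InnerProductSpace ℂ H]

private lemma numRanCl_isClosed (A : H →L[ℂ] H) : IsClosed (numRanCl A) := isClosed_closure

private lemma lower_bound (A : H →L[ℂ] H) (w : ℂ) (ψ : H) :
    Metric.infDist w (numRanCl A) * ‖ψ‖ ≤ ‖(A - w • ContinuousLinearMap.id ℂ H) ψ‖ := by
  rcases eq_or_ne ψ 0 with rfl | hψ
  · simp
  · have hc : (0:ℝ) < ‖ψ‖ := norm_pos_iff.mpr hψ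
    set φ : H := ((‖ψ‖:ℂ))⁻¹ • ψ with hφdef
    have hφ : ‖φ‖ = 1 := by
      simp [hφdef, norm_smul, hc.ne']
    have hmem : (inner ℂ φ (A φ) : ℂ) ∈ numRanCl A := subset_closure ⟨φ, hφ, rfl⟩
    have h1 : Metric.infDist w (numRanCl A) ≤ dist w (inner ℂ φ (A φ) : ℂ) :=
      Metric.infDist_le_dist_of_mem hmem
    have hφφ : (inner ℂ φ φ : ℂ) = 1 := by
      rw [inner_self_eq_norm_sq_to_K, hφ]; norm_num
    have h2 : (inner ℂ φ ((A - w • ContinuousLinearMap.id ℂ H) φ) : ℂ)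
        = (inner ℂ φ (A φ) : ℂ) - w := by
      simp [inner_sub_right, inner_smul_right, hφφ, hφ]
    have h3 : ‖(inner ℂ φ ((A - w • ContinuousLinearMap.id ℂ H) φ) : ℂ)‖
        ≤ ‖(A - w • ContinuousLinearMap.id ℂ H) φ‖ := by
      simpa [hφ, inner_sub_right, inner_smul_right, hφφ] using norm_inner_le_norm (𝕜 := ℂ) φ ((A - w • ContinuousLinearMap.id ℂ H) φ)
    have h4 : dist w (inner ℂ φ (A φ) : ℂ) ≤ ‖(A - w • ContinuousLinearMap.id ℂ H) φ‖ := by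
      rw [dist_eq_norm, ← norm_neg]
      rw [h2] at h3
      simpa [neg_sub] using h3
    have h5 : ‖(A - w • ContinuousLinearMap.id ℂ H) φ‖
        = ‖ψ‖⁻¹ * ‖(A - w • ContinuousLinearMap.id ℂ H) ψ‖ := by
      rw [hφdef, map_smul, norm_smul]
      simp [hc.ne']
    have := h1.trans h4
    rw [h5] at this
    rw [mul_comm (Metric.infDist w (numRanCl A)) ‖ψ‖, ← le_inv_mul_iff₀ hc]
    linarith

/-- bounded inverse from surjectivity, given the lower bound. -/
private lemma inv_of_surj [CompleteSpace H] (A : H →L[ℂ] H) (w : ℂ)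
    (hw : 0 < Metric.infDist w (numRanCl A))
    (hs : Function.Surjective (A - w • ContinuousLinearMap.id ℂ H)) :
    ∃ R : H →L[ℂ] H,
      (A - w • ContinuousLinearMap.id ℂ H).comp R = ContinuousLinearMap.id ℂ H ∧
      R.comp (A - w • ContinuousLinearMap.id ℂ H) = ContinuousLinearMap.id ℂ H ∧
      ‖R‖ ≤ (Metric.infDist w (numRanCl A))⁻¹ := by
  set T := A - w • ContinuousLinearMap.id ℂ H with hT
  set d := Metric.infDist w (numRanCl A) with hdd
  have hbd : ∀ ψ : H, ‖ψ‖ ≤ d⁻¹ * ‖T ψ‖ := by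
    intro ψ
    rw [le_inv_mul_iff₀ hw]
    simpa [mul_comm, hT, hdd] using lower_bound A w ψ
  have hinj : Function.Injective T := by
    intro x y hxy
    have := hbd (x - y)
    rw [map_sub, hxy, sub_self] at this
    have h0 : ‖x - y‖ ≤ 0 := by simpa using this
    have := le_antisymm h0 (norm_nonneg _)
    rwa [norm_eq_zero, sub_eq_zero] at this
  set e : H ≃L[ℂ] H := ContinuousLinearEquiv.ofBijective T
    (LinearMap.ker_eq_bot.mpr hinj) (LinearMap.range_eq_top.mpr hs) with he
  have hecoe : ∀ x, e x = T x := fun x => rfl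
  refine ⟨(e.symm : H →L[ℂ] H), ?_, ?_, ?_⟩
  · ext x
    have := e.apply_symm_apply x
    rw [hecoe] at this
    simpa using this
  · ext x
    have h := e.symm_apply_apply x
    rw [hecoe] at h
    simpa using h
  · refine ContinuousLinearMap.opNorm_le_bound _ (by positivity) (fun x => ?_)
    have h1 := hbd ((e.symm : H →L[ℂ] H) x)
    have h2 : T ((e.symm : H →L[ℂ] H) x) = x := by
      have := e.apply_symm_apply x
      rwa [hecoe] at this
    rwa [h2] at h1

private lemma isUnit_surj {T : H →L[ℂ] H} (h : IsUnit T) : Function.Surjective T := by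
  obtain ⟨u, rfl⟩ := h
  intro x
  refine ⟨(↑u⁻¹ : H →L[ℂ] H) x, ?_⟩
  rw [← ContinuousLinearMap.mul_apply, u.mul_inv, ContinuousLinearMap.one_apply]

private lemma surj_of_near [CompleteSpace H] (A : H →L[ℂ] H) {w w' : ℂ}
    (hw : 0 < Metric.infDist w (numRanCl A))
    (hs : Function.Surjective (A - w • ContinuousLinearMap.id ℂ H))
    (hnear : dist w' w < Metric.infDist w (numRanCl A)) :
    Function.Surjective (A - w' • ContinuousLinearMap.id ℂ H) := by
  obtain ⟨R, hR1, hR2, hRn⟩ := inv_of_surj A w hw hs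
  set d := Metric.infDist w (numRanCl A) with hdd
  set T := A - w • ContinuousLinearMap.id ℂ H with hT
  have hsn : ‖(w' - w) • R‖ < 1 := by
    rw [norm_smul]
    calc ‖w' - w‖ * ‖R‖ ≤ ‖w' - w‖ * d⁻¹ := by
          exact mul_le_mul_of_nonneg_left hRn (norm_nonneg _)
      _ < d * d⁻¹ := by
          apply mul_lt_mul_of_pos_right _ (inv_pos.mpr hw)
          simpa [dist_eq_norm] using hnear
      _ = 1 := mul_inv_cancel₀ hw.ne'
  set u : (H →L[ℂ] H)ˣ := Units.oneSub ((w' - w) • R) hsn with hu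
  have huval : (u : H →L[ℂ] H) = 1 - (w' - w) • R := rfl
  have key : A - w' • ContinuousLinearMap.id ℂ H = T * (u : H →L[ℂ] H) := by
    ext x
    have hTR : T (R x) = x := by
      have := ContinuousLinearMap.ext_iff.mp hR1 x
      simpa using this
    simp only [huval, ContinuousLinearMap.mul_apply, ContinuousLinearMap.sub_apply,
      ContinuousLinearMap.smul_apply, ContinuousLinearMap.one_apply,
      ContinuousLinearMap.coe_id', id_eq, map_sub, map_smul, hTR]
    simp only [hT, ContinuousLinearMap.sub_apply, ContinuousLinearMap.smul_apply,
      ContinuousLinearMap.coe_id', id_eq]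
    module
  have hfun : ⇑(A - w' • ContinuousLinearMap.id ℂ H) = ⇑T ∘ ⇑(u : H →L[ℂ] H) := by
    rw [key]; funext x; exact ContinuousLinearMap.mul_apply _ _ x
  rw [hfun]
  exact hs.comp (isUnit_surj u.isUnit)

private lemma surj_of_big [CompleteSpace H] [Nontrivial H] (A : H →L[ℂ] H) {w : ℂ} (hbig : ‖A‖ < ‖w‖) :
    Function.Surjective (A - w • ContinuousLinearMap.id ℂ H) := by
  have hns : w ∉ spectrum ℂ A := fun h => absurd (spectrum.norm_le_norm_of_mem h) (not_le.mpr hbig)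
  have hunit : IsUnit (algebraMap ℂ (H →L[ℂ] H) w - A) := not_not.mp hns
  have : A - w • ContinuousLinearMap.id ℂ H = -(algebraMap ℂ (H →L[ℂ] H) w - A) := by
    rw [Algebra.algebraMap_eq_smul_one, ContinuousLinearMap.one_def]
    abel
  rw [this]
  exact isUnit_surj hunit.neg

end aux

/-- if `dist(z, NumRan(A)) > 0` then `A - z` is injective with closed range and
satisfies the resolvent-type bound on its range; if moreover `z` lies in the unbounded
component of the complement of the (closed) numerical range, or `A - z` is surjective, then
`A - z` is boundedly invertible with `‖(A-z)⁻¹‖ ≤ dist(z, NumRan A)⁻¹`. -/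
theorem numRan_resolvent_bound {H : Type*} [NormedAddCommGroup H] [InnerProductSpace ℂ H]
    [CompleteSpace H] (A : H →L[ℂ] H) (z : ℂ)
    (hd : 0 < Metric.infDist z (numRanCl A)) :
    (Function.Injective (A - z • ContinuousLinearMap.id ℂ H) ∧
      IsClosed (Set.range (A - z • ContinuousLinearMap.id ℂ H)) ∧
      ∀ ψ : H, ‖ψ‖ ≤ (Metric.infDist z (numRanCl A))⁻¹ *
        ‖(A - z • ContinuousLinearMap.id ℂ H) ψ‖) ∧
    ((¬ Bornology.IsBounded (connectedComponentIn (numRanCl A)ᶜ z) ∨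
        Function.Surjective (A - z • ContinuousLinearMap.id ℂ H)) →
      ∃ R : H →L[ℂ] H,
        (A - z • ContinuousLinearMap.id ℂ H).comp R = ContinuousLinearMap.id ℂ H ∧
        R.comp (A - z • ContinuousLinearMap.id ℂ H) = ContinuousLinearMap.id ℂ H ∧
        ‖R‖ ≤ (Metric.infDist z (numRanCl A))⁻¹) := by
  have hne : (numRanCl A).Nonempty := by
    by_contra h
    rw [Set.not_nonempty_iff_eq_empty] at h
    rw [h, Metric.infDist_empty] at hd
    exact lt_irrefl 0 hd
  obtain ⟨ψ0, hψ0, -⟩ : ∃ ψ : H, ‖ψ‖ = 1 ∧ True := by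
    obtain ⟨w0, hw0⟩ := closure_nonempty_iff.mp hne
    obtain ⟨ψ, hψ, -⟩ := hw0
    exact ⟨ψ, hψ, trivial⟩
  haveI : Nontrivial H := by
    refine ⟨ψ0, 0, fun h => ?_⟩
    rw [h, norm_zero] at hψ0
    norm_num at hψ0
  set d := Metric.infDist z (numRanCl A) with hdd
  set T := A - z • ContinuousLinearMap.id ℂ H with hT
  have hbd : ∀ ψ : H, ‖ψ‖ ≤ d⁻¹ * ‖T ψ‖ := by
    intro ψ
    rw [le_inv_mul_iff₀ hd]
    simpa [mul_comm, hT, hdd] using lower_bound A z ψ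
  have hanti : AntilipschitzWith (⟨d, hd.le⟩ : NNReal)⁻¹ T := by
    apply ContinuousLinearMap.antilipschitz_of_bound
    intro x
    exact hbd x
  have hdpos : ∀ w ∈ (numRanCl A)ᶜ, 0 < Metric.infDist w (numRanCl A) := fun w hw =>
    ((numRanCl_isClosed A).notMem_iff_infDist_pos hne).mp hw
  refine ⟨⟨hanti.injective, hanti.isClosed_range T.uniformContinuous, hbd⟩, ?_⟩
  rintro (hub | hs)
  · -- unbounded component case
    set C := connectedComponentIn (numRanCl A)ᶜ z with hC
    have hzc : z ∈ (numRanCl A)ᶜ := by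
      intro hz
      have : Metric.infDist z (numRanCl A) = 0 := Metric.infDist_zero_of_mem hz
      rw [hdd, this] at hd
      exact lt_irrefl 0 hd
    set U : Set ℂ := {w | 0 < Metric.infDist w (numRanCl A) ∧
      Function.Surjective (A - w • ContinuousLinearMap.id ℂ H)} with hUdef
    set V : Set ℂ := {w | 0 < Metric.infDist w (numRanCl A) ∧
      ¬ Function.Surjective (A - w • ContinuousLinearMap.id ℂ H)} with hVdef
    have hball : ∀ w ∈ (U ∪ V), ∀ w' ∈ Metric.ball w (Metric.infDist w (numRanCl A) / 2),
        0 < Metric.infDist w' (numRanCl A) ∧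
        Metric.infDist w (numRanCl A) / 2 < Metric.infDist w' (numRanCl A) := by
      intro w hw w' hw'
      have hwpos : 0 < Metric.infDist w (numRanCl A) := by
        rcases hw with h | h
        · exact h.1
        · exact h.1
      rw [Metric.mem_ball] at hw'
      have h1 : Metric.infDist w (numRanCl A) ≤ Metric.infDist w' (numRanCl A) + dist w w' :=
        Metric.infDist_le_infDist_add_dist
      rw [dist_comm] at h1
      constructor <;> linarith
    have hU : IsOpen U := by
      rw [Metric.isOpen_iff]
      intro w hw
      refine ⟨Metric.infDist w (numRanCl A) / 2, by linarith [hw.1], fun w' hw' => ?_⟩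
      obtain ⟨hp, -⟩ := hball w (Or.inl hw) w' hw'
      refine ⟨hp, surj_of_near A hw.1 hw.2 ?_⟩
      rw [Metric.mem_ball] at hw'
      linarith [hw.1]
    have hV : IsOpen V := by
      rw [Metric.isOpen_iff]
      intro w hw
      refine ⟨Metric.infDist w (numRanCl A) / 2, by linarith [hw.1], fun w' hw' => ?_⟩
      obtain ⟨hp, hgt⟩ := hball w (Or.inr hw) w' hw'
      refine ⟨hp, fun hsurj => hw.2 (surj_of_near A hp hsurj ?_)⟩
      rw [Metric.mem_ball, dist_comm] at hw'
      linarith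
    have hdisj : Disjoint U V := Set.disjoint_left.mpr fun w hw hw' => hw'.2 hw.2
    have hsub : C ⊆ U ∪ V := by
      intro w hwC
      have hp := hdpos w (connectedComponentIn_subset _ _ hwC)
      by_cases hsurj : Function.Surjective (A - w • ContinuousLinearMap.id ℂ H)
      · exact Or.inl ⟨hp, hsurj⟩
      · exact Or.inr ⟨hp, hsurj⟩
    obtain ⟨w0, hw0C, hw0big⟩ : ∃ w0 ∈ C, ‖A‖ < ‖w0‖ := by
      by_contra h
      push_neg at h
      exact hub (isBounded_iff_forall_norm_le.mpr ⟨‖A‖, fun x hx => (h x hx)⟩)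
    have hw0U : w0 ∈ U := ⟨hdpos w0 (connectedComponentIn_subset _ _ hw0C), surj_of_big A hw0big⟩
    have hCU : C ⊆ U := IsPreconnected.subset_left_of_subset_union hU hV hdisj hsub
      ⟨w0, hw0C, hw0U⟩ isPreconnected_connectedComponentIn
    have hzU : z ∈ U := hCU (mem_connectedComponentIn hzc)
    exact inv_of_surj A z hd hzU.2
  · exact inv_of_surj A z hd hs
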